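/- Let Γ be a finite graph and Δ ⊆ Γ a full subgraph such that for every vertex v ∈ Γ ∖ Δ the subgraph Δ ∖ st_Γ(v) is connected. Then the special subgroup A_Δ is preserved (up to conjugacy) by every partial conjugation of A_Γ, hence by the entire group PAut(A_Γ) of pure symmetric automorphisms. -/

import Mathlib

/-!
STATEMENT 9: If `Δ ⊆ Γ` is a full subgraph such that `Δ ∖ st_Γ(v)` is connected for every
vertex `v ∈ Γ ∖ Δ`, then the special subgroup `A_Δ` is preserved up to conjugacy by every
partial conjugation of `A_Γ`, hence by the whole group `PAut(A_Γ)`.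
-/

/-- The defining relators of the right-angled Artin group of a graph. -/
def raagRels {V : Type*} (Γ : SimpleGraph V) : Set (FreeGroup V) :=
  {r | ∃ u v : V, Γ.Adj u v ∧
    r = FreeGroup.of u * FreeGroup.of v * (FreeGroup.of u)⁻¹ * (FreeGroup.of v)⁻¹}

/-- The right-angled Artin group on a graph `Γ`. -/
abbrev RAAG {V : Type*} (Γ : SimpleGraph V) : Type _ := PresentedGroup (raagRels Γ)

/-- The standard generator of `RAAG Γ` corresponding to a vertex. -/
def raagGen {V : Type*} (Γ : SimpleGraph V) (v : V) : RAAG Γ := PresentedGroup.of v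

/-- The star of a vertex: the vertex together with its neighbours. -/
def graphStar {V : Type*} (Γ : SimpleGraph V) (v : V) : Set V :=
  insert v (Γ.neighborSet v)

/-- The connected component (as a set of vertices of `V`) of the vertex `u` in the induced
subgraph of `Γ` on the set `s`. -/
def compIn {V : Type*} (Γ : SimpleGraph V) (s : Set V) (u : V) : Set V :=
  {x | ∃ (hu : u ∈ s) (hx : x ∈ s), (Γ.induce s).Reachable ⟨u, hu⟩ ⟨x, hx⟩}

/-- `A` is a union of connected components of `Γ ∖ st(v)`. -/
def IsUnionOfComponents {V : Type*} (Γ : SimpleGraph V) (v : V) (A : Set V) : Prop :=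
  A ⊆ (graphStar Γ v)ᶜ ∧ ∀ u ∈ A, compIn Γ (graphStar Γ v)ᶜ u ⊆ A

open Classical in
/-- `φ` is the partial conjugation by the vertex `v` based at the set `A`: it sends each
standard generator `u ∈ A` to `v⁻¹ u v` and fixes all other standard generators. -/
noncomputable def IsPartialConj {V : Type*} (Γ : SimpleGraph V)
    (φ : MulAut (RAAG Γ)) (v : V) (A : Set V) : Prop :=
  ∀ u : V, φ (raagGen Γ u) =
    if u ∈ A then (raagGen Γ v)⁻¹ * raagGen Γ u * raagGen Γ v else raagGen Γ u

/-- The special subgroup of the RAAG generated by the vertices of `Δ`. -/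
def specialSubgroup {V : Type*} (Γ : SimpleGraph V) (Δ : Set V) : Subgroup (RAAG Γ) :=
  Subgroup.closure (raagGen Γ '' Δ)

/-- `φ` preserves the subgroup `S` up to conjugacy: some representative of the outer
class of `φ` maps `S` onto `S`. -/
def PreservesSubgroup {V : Type*} (Γ : SimpleGraph V) (φ : MulAut (RAAG Γ))
    (S : Subgroup (RAAG Γ)) : Prop :=
  ∃ x : RAAG Γ, S.map ((MulAut.conj x * φ : MulAut (RAAG Γ)) : RAAG Γ →* RAAG Γ) = S

/-- `φ` acts trivially on the subgroup `S`: some representative of the outer class of `φ`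
restricts to the identity on `S`. -/
def ActsTriviallyOn {V : Type*} (Γ : SimpleGraph V) (φ : MulAut (RAAG Γ))
    (S : Subgroup (RAAG Γ)) : Prop :=
  ∃ x : RAAG Γ, ∀ a ∈ S, x * φ a * x⁻¹ = a

/-- The subgroup of pure symmetric automorphisms: the subgroup of `Aut(A_Γ)` generated by
all partial conjugations `c_L^v` with `L` a connected component of `Γ ∖ st(v)` (by a
theorem of Laurence these generate the group of all automorphisms sending each standard
generator to a conjugate of itself). -/
def PAutRaag {V : Type*} (Γ : SimpleGraph V) : Subgroup (MulAut (RAAG Γ)) :=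
  Subgroup.closure {φ | ∃ (v : V) (u : V), u ∈ (graphStar Γ v)ᶜ ∧
    IsPartialConj Γ φ v (compIn Γ (graphStar Γ v)ᶜ u)}

/-! ### Auxiliary lemmas -/

/-- Adjacent generators commute in the RAAG. -/
lemma raag_comm {V : Type*} (Γ : SimpleGraph V) {u v : V} (h : Γ.Adj u v) :
    raagGen Γ u * raagGen Γ v = raagGen Γ v * raagGen Γ u := by
  have hr : (FreeGroup.of u * FreeGroup.of v * (FreeGroup.of u)⁻¹ * (FreeGroup.of v)⁻¹)
      ∈ raagRels Γ := ⟨u, v, h, rfl⟩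
  have h1 : (QuotientGroup.mk (FreeGroup.of u * FreeGroup.of v * (FreeGroup.of u)⁻¹ *
      (FreeGroup.of v)⁻¹) : RAAG Γ) = 1 :=
    (QuotientGroup.eq_one_iff _).2 (Subgroup.subset_normalClosure hr)
  have h2 : raagGen Γ u * raagGen Γ v * (raagGen Γ u)⁻¹ * (raagGen Γ v)⁻¹ = 1 := by
    have h1' : PresentedGroup.mk (raagRels Γ) (FreeGroup.of u * FreeGroup.of v *
        (FreeGroup.of u)⁻¹ * (FreeGroup.of v)⁻¹) = 1 := h1
    simpa [raagGen, PresentedGroup.of, map_mul, map_inv] using h1'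
  have h3 : raagGen Γ u * raagGen Γ v * (raagGen Γ u)⁻¹ = raagGen Γ v := by
    have := mul_eq_one_iff_eq_inv.mp h2
    simpa using this
  exact mul_inv_eq_iff_eq_mul.mp h3

lemma raag_conj_star {V : Type*} (Γ : SimpleGraph V) {u v : V} (hu : u ∈ graphStar Γ v)
    (hne : u ≠ v) :
    (raagGen Γ v)⁻¹ * raagGen Γ u * raagGen Γ v = raagGen Γ u := by
  have hadj : Γ.Adj u v := by
    rcases hu with h | h
    · exact absurd h hne
    · exact (Γ.mem_neighborSet v u).1 h |>.symm
  rw [mul_assoc, raag_comm Γ hadj, ← mul_assoc, inv_mul_cancel, one_mul]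

lemma mapAut_mul {G : Type*} [Group G] (e f : MulAut G) (S : Subgroup G) :
    S.map ((e * f : MulAut G) : G →* G) = (S.map (f : G →* G)).map (e : G →* G) := by
  rw [Subgroup.map_map]
  rfl

lemma mapAut_one {G : Type*} [Group G] (S : Subgroup G) :
    S.map ((1 : MulAut G) : G →* G) = S := by
  have : ((1 : MulAut G) : G →* G) = MonoidHom.id G := rfl
  rw [this, Subgroup.map_id]

/-- If a hom sends generators into the closure and every generator is in the image of the
closure, then the hom maps the closure onto itself. -/
lemma map_closure_self {G : Type*} [Group G] (f : G →* G) (T : Set G)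
    (h1 : ∀ t ∈ T, f t ∈ Subgroup.closure T)
    (h2 : ∀ t ∈ T, t ∈ (Subgroup.closure T).map f) :
    (Subgroup.closure T).map f = Subgroup.closure T := by
  refine le_antisymm ?_ ((Subgroup.closure_le _).2 h2)
  rw [MonoidHom.map_closure]
  exact (Subgroup.closure_le _).2 (by rintro _ ⟨t, ht, rfl⟩; exact h1 t ht)

theorem special_preserved_of_connected_complements {V : Type*} [Fintype V]
    (Γ : SimpleGraph V) (Δ : Set V)
    (hconn : ∀ v ∉ Δ, (Γ.induce (Δ \ graphStar Γ v)).Preconnected) :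
    (∀ (v : V) (K : Set V) (g : MulAut (RAAG Γ)), IsUnionOfComponents Γ v K →
        IsPartialConj Γ g v K → PreservesSubgroup Γ g (specialSubgroup Γ Δ)) ∧
    (∀ g ∈ PAutRaag Γ, PreservesSubgroup Γ g (specialSubgroup Γ Δ)) := by
  set T : Set (RAAG Γ) := raagGen Γ '' Δ with hT
  have hST : specialSubgroup Γ Δ = Subgroup.closure T := rfl
  have part1 : ∀ (v : V) (K : Set V) (g : MulAut (RAAG Γ)), IsUnionOfComponents Γ v K →
      IsPartialConj Γ g v K → PreservesSubgroup Γ g (specialSubgroup Γ Δ) := by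
    intro v K g hK hg
    have hvK : v ∉ K := fun h => (hK.1 h) (Set.mem_insert v _)
    have hgv : g (raagGen Γ v) = raagGen Γ v := by rw [hg v, if_neg hvK]
    by_cases hv : v ∈ Δ
    · -- `v ∈ Δ`: the partial conjugation itself preserves `A_Δ`.
      refine ⟨1, ?_⟩
      rw [hST]
      apply map_closure_self
      · rintro _ ⟨u, huΔ, rfl⟩
        have hvT : raagGen Γ v ∈ Subgroup.closure T := Subgroup.subset_closure ⟨v, hv, rfl⟩
        have huT : raagGen Γ u ∈ Subgroup.closure T := Subgroup.subset_closure ⟨u, huΔ, rfl⟩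
        have : ((MulAut.conj (1 : RAAG Γ) * g : MulAut (RAAG Γ)) : RAAG Γ →* RAAG Γ)
            (raagGen Γ u) = g (raagGen Γ u) := by simp
        rw [this, hg u]
        split
        · exact mul_mem (mul_mem (inv_mem hvT) huT) hvT
        · exact huT
      · rintro _ ⟨u, huΔ, rfl⟩
        by_cases huK : u ∈ K
        · refine ⟨raagGen Γ v * raagGen Γ u * (raagGen Γ v)⁻¹, ?_, ?_⟩
          · exact mul_mem (mul_mem (Subgroup.subset_closure ⟨v, hv, rfl⟩)
              (Subgroup.subset_closure ⟨u, huΔ, rfl⟩))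
              (inv_mem (Subgroup.subset_closure ⟨v, hv, rfl⟩))
          · have : ((MulAut.conj (1 : RAAG Γ) * g : MulAut (RAAG Γ)) : RAAG Γ →* RAAG Γ)
                (raagGen Γ v * raagGen Γ u * (raagGen Γ v)⁻¹) =
                g (raagGen Γ v) * g (raagGen Γ u) * (g (raagGen Γ v))⁻¹ := by simp
            rw [this, hgv, hg u, if_pos huK]
            group
        · refine ⟨raagGen Γ u, Subgroup.subset_closure ⟨u, huΔ, rfl⟩, ?_⟩
          have : ((MulAut.conj (1 : RAAG Γ) * g : MulAut (RAAG Γ)) : RAAG Γ →* RAAG Γ)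
              (raagGen Γ u) = g (raagGen Γ u) := by simp
          rw [this, hg u, if_neg huK]
    · -- `v ∉ Δ`
      by_cases hKΔ : (Δ ∩ K).Nonempty
      · -- conjugating back by `v` fixes all generators of `A_Δ`.
        obtain ⟨u0, hu0Δ, hu0K⟩ := hKΔ
        have hu0s : u0 ∈ (graphStar Γ v)ᶜ := hK.1 hu0K
        have hkey : ∀ u ∈ Δ, u ∉ K → u ∈ graphStar Γ v := by
          intro u huΔ huK
          by_contra hus
          have hu0m : u0 ∈ Δ \ graphStar Γ v := ⟨hu0Δ, hu0s⟩
          have hum : u ∈ Δ \ graphStar Γ v := ⟨huΔ, hus⟩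
          have hreach := hconn v hv ⟨u0, hu0m⟩ ⟨u, hum⟩
          let ι : Γ.induce (Δ \ graphStar Γ v) →g Γ.induce (graphStar Γ v)ᶜ :=
            ⟨fun x => ⟨x.1, x.2.2⟩, fun {a b} hab => hab⟩
          have hreach' : (Γ.induce (graphStar Γ v)ᶜ).Reachable ⟨u0, hu0s⟩ ⟨u, hus⟩ :=
            hreach.map ι
          exact huK (hK.2 u0 hu0K ⟨hu0s, hus, hreach'⟩)
        refine ⟨raagGen Γ v, ?_⟩
        rw [hST]
        have hfix : ∀ u ∈ Δ,
            ((MulAut.conj (raagGen Γ v) * g : MulAut (RAAG Γ)) : RAAG Γ →* RAAG Γ)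
              (raagGen Γ u) = raagGen Γ u := by
          intro u huΔ
          have happ : ((MulAut.conj (raagGen Γ v) * g : MulAut (RAAG Γ)) : RAAG Γ →* RAAG Γ)
              (raagGen Γ u) = raagGen Γ v * g (raagGen Γ u) * (raagGen Γ v)⁻¹ := by simp
          rw [happ, hg u]
          by_cases huK : u ∈ K
          · rw [if_pos huK]; group
          · rw [if_neg huK]
            have hust : u ∈ graphStar Γ v := hkey u huΔ huK
            have hne : u ≠ v := fun h => hv (h ▸ huΔ)
            have := raag_conj_star Γ hust hne
            calc raagGen Γ v * raagGen Γ u * (raagGen Γ v)⁻¹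
                = raagGen Γ v * ((raagGen Γ v)⁻¹ * raagGen Γ u * raagGen Γ v) *
                  (raagGen Γ v)⁻¹ := by rw [this]
              _ = raagGen Γ u := by group
        apply map_closure_self
        · rintro _ ⟨u, huΔ, rfl⟩
          rw [hfix u huΔ]
          exact Subgroup.subset_closure ⟨u, huΔ, rfl⟩
        · rintro _ ⟨u, huΔ, rfl⟩
          exact ⟨raagGen Γ u, Subgroup.subset_closure ⟨u, huΔ, rfl⟩, hfix u huΔ⟩
      · -- `K ∩ Δ = ∅`: all generators of `A_Δ` are fixed.
        refine ⟨1, ?_⟩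
        rw [hST]
        have hfix : ∀ u ∈ Δ,
            ((MulAut.conj (1 : RAAG Γ) * g : MulAut (RAAG Γ)) : RAAG Γ →* RAAG Γ)
              (raagGen Γ u) = raagGen Γ u := by
          intro u huΔ
          have huK : u ∉ K := fun h => hKΔ ⟨u, huΔ, h⟩
          have : ((MulAut.conj (1 : RAAG Γ) * g : MulAut (RAAG Γ)) : RAAG Γ →* RAAG Γ)
              (raagGen Γ u) = g (raagGen Γ u) := by simp
          rw [this, hg u, if_neg huK]
        apply map_closure_self
        · rintro _ ⟨u, huΔ, rfl⟩
          rw [hfix u huΔ]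
          exact Subgroup.subset_closure ⟨u, huΔ, rfl⟩
        · rintro _ ⟨u, huΔ, rfl⟩
          exact ⟨raagGen Γ u, Subgroup.subset_closure ⟨u, huΔ, rfl⟩, hfix u huΔ⟩
  refine ⟨part1, ?_⟩
  intro g hg
  refine Subgroup.closure_induction ?_ ?_ ?_ ?_ hg
  · -- generators: single-component partial conjugations
    rintro φ ⟨v, u, hu, hφ⟩
    refine part1 v (compIn Γ (graphStar Γ v)ᶜ u) φ ⟨?_, ?_⟩ hφ
    · rintro x ⟨hus, hxs, -⟩
      exact hxs
    · rintro w ⟨hus, hws, hr⟩ x ⟨hws', hxs, hr'⟩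
      exact ⟨hus, hxs, hr.trans hr'⟩
  · exact ⟨1, by rw [mul_one, map_one, mapAut_one]⟩
  · rintro a b ha hb ⟨x, hx⟩ ⟨y, hy⟩
    refine ⟨x * a y, ?_⟩
    have key : (MulAut.conj (x * a y) * (a * b) : MulAut (RAAG Γ)) =
        (MulAut.conj x * a) * (MulAut.conj y * b) := by
      ext t
      simp [mul_assoc, map_mul, map_inv]
    rw [key, mapAut_mul, hy, hx]
  · rintro a ha ⟨x, hx⟩
    refine ⟨a⁻¹ x⁻¹, ?_⟩
    have key : (MulAut.conj (a⁻¹ x⁻¹) * a⁻¹ : MulAut (RAAG Γ)) =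
        (MulAut.conj x * a)⁻¹ := by
      symm
      apply inv_eq_of_mul_eq_one_right
      ext t
      simp [mul_assoc, map_mul, map_inv]
    rw [key]
    conv_lhs => rw [← hx]
    rw [← mapAut_mul, inv_mul_cancel, mapAut_one]
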